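/- Let E and B be Banach spaces, J : E → B an injective continuous linear map, and S : B → E a linear map such that S ∘ J : E → E is continuous and |J ∘ S|_{L(B,B)} ≤ ε for some ε ∈ (0,1). Then the continuous linear map L : E → E, L x = x − S(J x), is a topological isomorphism: L is bijective with continuous inverse. -/

import Mathlib

/-- **Abstract isomorphism lemma.** Let `E`, `B` be Banach spaces, `J : E → B` an injective
continuous linear map, and `S : B → E` a linear map such that `S ∘ J : E → E` is continuous
and `‖J ∘ S‖_{L(B,B)} ≤ ε` for some `ε ∈ (0,1)` (i.e. `‖J (S x)‖ ≤ ε ‖x‖` for all `x`).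
Then the continuous linear map `L : E → E`, `L x = x − S (J x)`, is a topological
isomorphism: `L` is bijective with continuous inverse. -/
theorem stmt14
    {E B : Type*} [NormedAddCommGroup E] [NormedSpace ℝ E] [CompleteSpace E]
    [NormedAddCommGroup B] [NormedSpace ℝ B] [CompleteSpace B]
    (J : E →L[ℝ] B) (hJ : Function.Injective J)
    (S : B →ₗ[ℝ] E) (hSJ : Continuous fun x : E => S (J x))
    (ε : ℝ) (hε : ε ∈ Set.Ioo (0:ℝ) 1)
    (hJS : ∀ x : B, ‖J (S x)‖ ≤ ε * ‖x‖) :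
    ∃ e : E ≃L[ℝ] E, ∀ x : E, e x = x - S (J x) := by
  obtain ⟨hε0, hε1⟩ := hε
  -- T = J ∘ S : B →L[ℝ] B
  set T : B →L[ℝ] B :=
    LinearMap.mkContinuous (J.toLinearMap.comp S) ε hJS with hT
  have hTnorm : ‖T‖ < 1 :=
    lt_of_le_of_lt (LinearMap.mkContinuous_norm_le _ hε0.le hJS) hε1
  have hTapp : ∀ b : B, T b = J (S b) := fun b => rfl
  -- 1 - T is a unit
  have hUnit : IsUnit ((1 : B →L[ℝ] B) - T) := by
    have h : ‖(1 : B →L[ℝ] B) - (1 - T)‖ < 1 := by simpa using hTnorm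
    exact (Units.oneSub _ (by simpa using h)).isUnit
  obtain ⟨u, hu⟩ := hUnit
  -- L = id - S ∘ J
  set L : E →L[ℝ] E :=
    { toLinearMap := LinearMap.id - S.comp J.toLinearMap
      cont := continuous_id.sub hSJ } with hL
  have hLapp : ∀ x : E, L x = x - S (J x) := fun x => rfl
  have key1 : ∀ v : B, u.inv (((1 : B →L[ℝ] B) - T) v) = v := by
    intro v
    calc u.inv (((1 : B →L[ℝ] B) - T) v) = u.inv ((u : B →L[ℝ] B) v) := by rw [hu]
      _ = (u.inv * (u : B →L[ℝ] B)) v := rfl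
      _ = v := by rw [show u.inv * (u : B →L[ℝ] B) = 1 from u.inv_mul]; rfl
  have key2 : ∀ v : B, ((1 : B →L[ℝ] B) - T) (u.inv v) = v := by
    intro v
    calc ((1 : B →L[ℝ] B) - T) (u.inv v) = (u : B →L[ℝ] B) (u.inv v) := by rw [hu]
      _ = ((u : B →L[ℝ] B) * u.inv) v := rfl
      _ = v := by rw [show (u : B →L[ℝ] B) * u.inv = 1 from u.mul_inv]; rfl
  have hinj : Function.Injective L := by
    intro x y hxy
    have h : x - S (J x) = y - S (J y) := hxy
    have hJeq : ((1 : B →L[ℝ] B) - T) (J x) = ((1 : B →L[ℝ] B) - T) (J y) := by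
      have := congrArg J h
      simp only [map_sub] at this
      simpa [ContinuousLinearMap.sub_apply, hTapp] using this
    have hJxy : J x = J y := by
      rw [← key1 (J x), ← key1 (J y), hJeq]
    exact hJ hJxy
  have hsurj : Function.Surjective L := by
    intro y
    set b : B := u.inv (J y) with hb
    refine ⟨y + S b, ?_⟩
    have hbEq : J y = b - T b := by
      have h2 : ((1 : B →L[ℝ] B) - T) b = J y := key2 (J y)
      rw [ContinuousLinearMap.sub_apply, ContinuousLinearMap.one_apply] at h2
      exact h2.symm
    have hJx : J (y + S b) = b := by
      rw [map_add, hbEq, hTapp]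
      abel
    show (y + S b) - S (J (y + S b)) = y
    rw [hJx]; abel
  have hker : LinearMap.ker (L : E →ₗ[ℝ] E) = ⊥ := LinearMap.ker_eq_bot.mpr hinj
  have hrange : LinearMap.range (L : E →ₗ[ℝ] E) = ⊤ := LinearMap.range_eq_top.mpr hsurj
  refine ⟨ContinuousLinearEquiv.ofBijective L hker hrange, fun x => ?_⟩
  have := ContinuousLinearEquiv.coeFn_ofBijective L hker hrange
  rw [show ((ContinuousLinearEquiv.ofBijective L hker hrange) x) = L x from congrFun this x]
  exact hLapp x
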